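/- For any integer h ≥ 1, any undirected multigraph G = (V,E) on n vertices with |E| ≥ ((h+1)/h)·|V| contains a set X of fewer than 4·h·log₂(n) vertices such that the induced subgraph G[X] has strictly more edges than vertices. -/

import Mathlib

set_option linter.unusedSectionVars false


open Finset

namespace BF

universe u v

section Graph

variable {V : Type u} {ι : Type v} [DecidableEq V] [Fintype V] [Fintype ι]

/-- edges with both endpoints in `S` -/
def eIn (ends : ι → V × V) (S : Finset V) : Finset ι :=
  Finset.univ.filter fun e => (ends e).1 ∈ S ∧ (ends e).2 ∈ S

/-- edges touching `S` -/
def eTouch (ends : ι → V × V) (S : Finset V) : Finset ι :=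
  Finset.univ.filter fun e => (ends e).1 ∈ S ∨ (ends e).2 ∈ S

def nbhd (ends : ι → V × V) (S : Finset V) : Finset V :=
  S ∪ (eTouch ends S).image (fun e => (ends e).1)
    ∪ (eTouch ends S).image (fun e => (ends e).2)

def ball (ends : ι → V × V) (v₀ : V) : ℕ → Finset V
  | 0 => {v₀}
  | r + 1 => nbhd ends (ball ends v₀ r)

variable (ends : ι → V × V) (v₀ : V)

lemma subset_nbhd (S : Finset V) : S ⊆ nbhd ends S := by
  intro x hx
  exact mem_union_left _ (mem_union_left _ hx)

lemma ball_subset_succ (r : ℕ) : ball ends v₀ r ⊆ ball ends v₀ (r + 1) :=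
  subset_nbhd ends _

lemma ball_mono : Monotone (ball ends v₀) := by
  apply monotone_nat_of_le_succ
  exact ball_subset_succ ends v₀

lemma root_mem_ball (r : ℕ) : v₀ ∈ ball ends v₀ r := by
  induction r with
  | zero => simp [ball]
  | succ r ih => exact subset_nbhd ends _ ih

lemma ends_mem_nbhd {S : Finset V} {e : ι} (he : e ∈ eTouch ends S) :
    (ends e).1 ∈ nbhd ends S ∧ (ends e).2 ∈ nbhd ends S := by
  constructor
  · exact mem_union_left _ (mem_union_right _ (mem_image_of_mem _ he))
  · exact mem_union_right _ (mem_image_of_mem _ he)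

lemma eTouch_subset_eIn_succ (r : ℕ) :
    eTouch ends (ball ends v₀ r) ⊆ eIn ends (ball ends v₀ (r + 1)) := by
  intro e he
  have h2 := ends_mem_nbhd ends he
  simp only [eIn, mem_filter, mem_univ, true_and]
  exact ⟨h2.1, h2.2⟩

lemma eIn_subset_eTouch (S : Finset V) : eIn ends S ⊆ eTouch ends S := by
  intro e he
  simp only [eIn, mem_filter, mem_univ, true_and] at he
  simp only [eTouch, mem_filter, mem_univ, true_and]
  exact Or.inl he.1

lemma eIn_mono {S S' : Finset V} (h : S ⊆ S') : eIn ends S ⊆ eIn ends S' := by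
  intro e he
  simp only [eIn, mem_filter, mem_univ, true_and] at he ⊢
  exact ⟨h he.1, h he.2⟩

lemma mem_nbhd_new {S : Finset V} {u : V} (hu : u ∈ nbhd ends S) (hnu : u ∉ S) :
    ∃ e : ι, ((ends e).1 ∈ S ∧ (ends e).2 = u) ∨ ((ends e).2 ∈ S ∧ (ends e).1 = u) := by
  rcases mem_union.1 hu with hu' | hu'
  · rcases mem_union.1 hu' with hu'' | hu''
    · exact absurd hu'' hnu
    · obtain ⟨e, he, heq⟩ := mem_image.1 hu''
      simp only [eTouch, mem_filter, mem_univ, true_and] at he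
      rcases he with h1 | h2
      · exact absurd (heq ▸ h1) hnu
      · exact ⟨e, Or.inr ⟨h2, heq⟩⟩
  · obtain ⟨e, he, heq⟩ := mem_image.1 hu'
    simp only [eTouch, mem_filter, mem_univ, true_and] at he
    rcases he with h1 | h2
    · exact ⟨e, Or.inl ⟨h1, heq⟩⟩
    · exact absurd (heq ▸ h2) hnu

end Graph

end BF
set_option linter.unusedSectionVars false

namespace BF

section Depth

variable {V : Type u} {ι : Type v} [DecidableEq V] [Fintype V] [Fintype ι]
variable (ends : ι → V × V) (v₀ : V)

open scoped Classical

/-- depth of a vertex in the BFS layering (junk value 0 if unreachable) -/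
noncomputable def depth (u : V) : ℕ :=
  if h : ∃ r, u ∈ ball ends v₀ r then Nat.find h else 0

lemma depth_le_of_mem {u : V} {r : ℕ} (hu : u ∈ ball ends v₀ r) :
    depth ends v₀ u ≤ r := by
  rw [depth, dif_pos ⟨r, hu⟩]
  exact Nat.find_le hu

lemma mem_ball_depth {u : V} (h : ∃ r, u ∈ ball ends v₀ r) :
    u ∈ ball ends v₀ (depth ends v₀ u) := by
  rw [depth, dif_pos h]
  exact Nat.find_spec h

lemma depth_root : depth ends v₀ v₀ = 0 :=
  Nat.le_zero.1 (depth_le_of_mem ends v₀ (by simp [ball]))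

lemma depth_pos {u : V} (h : ∃ r, u ∈ ball ends v₀ r) (hne : u ≠ v₀) :
    1 ≤ depth ends v₀ u := by
  by_contra hc
  have h0 : depth ends v₀ u = 0 := by omega
  have := mem_ball_depth ends v₀ h
  rw [h0] at this
  simp [ball] at this
  exact hne this

lemma not_mem_ball_pred {u : V} (h : ∃ r, u ∈ ball ends v₀ r) (hne : u ≠ v₀) :
    u ∉ ball ends v₀ (depth ends v₀ u - 1) := by
  have h1 := depth_pos ends v₀ h hne
  intro hmem
  have := depth_le_of_mem ends v₀ hmem
  omega

lemma exists_parent {u : V} (h : ∃ r, u ∈ ball ends v₀ r) (hne : u ≠ v₀) :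
    ∃ q : ι × V, q.2 ∈ ball ends v₀ (depth ends v₀ u - 1) ∧
      (ends q.1 = (q.2, u) ∨ ends q.1 = (u, q.2)) := by
  have h1 := depth_pos ends v₀ h hne
  have hmem : u ∈ ball ends v₀ (depth ends v₀ u - 1 + 1) := by
    have := mem_ball_depth ends v₀ h
    have heq : depth ends v₀ u - 1 + 1 = depth ends v₀ u := by omega
    rwa [heq]
  have hnmem := not_mem_ball_pred ends v₀ h hne
  rw [show ball ends v₀ (depth ends v₀ u - 1 + 1) = nbhd ends (ball ends v₀ (depth ends v₀ u - 1)) from rfl] at hmem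
  obtain ⟨e, he⟩ := mem_nbhd_new ends hmem hnmem
  rcases he with ⟨h1', h2'⟩ | ⟨h1', h2'⟩
  · exact ⟨(e, (ends e).1), h1', Or.inl (by rw [← h2'])⟩
  · exact ⟨(e, (ends e).2), h1', Or.inr (by rw [← h2'])⟩

noncomputable def parentV (u : V) : V :=
  if h : (∃ r, u ∈ ball ends v₀ r) ∧ u ≠ v₀ then
    (Classical.choose (exists_parent ends v₀ h.1 h.2)).2
  else v₀

noncomputable def parentE [Nonempty ι] (u : V) : ι :=
  if h : (∃ r, u ∈ ball ends v₀ r) ∧ u ≠ v₀ then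
    (Classical.choose (exists_parent ends v₀ h.1 h.2)).1
  else Classical.arbitrary ι

lemma parent_spec [Nonempty ι] {u : V} (h : ∃ r, u ∈ ball ends v₀ r) (hne : u ≠ v₀) :
    parentV ends v₀ u ∈ ball ends v₀ (depth ends v₀ u - 1) ∧
      (ends (parentE ends v₀ u) = (parentV ends v₀ u, u) ∨
       ends (parentE ends v₀ u) = (u, parentV ends v₀ u)) := by
  have hc : (∃ r, u ∈ ball ends v₀ r) ∧ u ≠ v₀ := ⟨h, hne⟩
  rw [parentV, dif_pos hc, parentE, dif_pos hc]
  exact Classical.choose_spec (exists_parent ends v₀ hc.1 hc.2)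

lemma parentV_mem_pred {u : V} (h : ∃ r, u ∈ ball ends v₀ r) (hne : u ≠ v₀) :
    parentV ends v₀ u ∈ ball ends v₀ (depth ends v₀ u - 1) := by
  have hc : (∃ r, u ∈ ball ends v₀ r) ∧ u ≠ v₀ := ⟨h, hne⟩
  rw [parentV, dif_pos hc]
  exact (Classical.choose_spec (exists_parent ends v₀ hc.1 hc.2)).1

lemma depth_parentV_lt {u : V} (h : ∃ r, u ∈ ball ends v₀ r) (hne : u ≠ v₀) :
    depth ends v₀ (parentV ends v₀ u) < depth ends v₀ u := by
  have h1 := depth_pos ends v₀ h hne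
  have h2 := depth_le_of_mem ends v₀ (parentV_mem_pred ends v₀ h hne)
  omega

lemma parentV_hasDepth {u : V} (h : ∃ r, u ∈ ball ends v₀ r) (hne : u ≠ v₀) :
    ∃ r, parentV ends v₀ u ∈ ball ends v₀ r :=
  ⟨_, parentV_mem_pred ends v₀ h hne⟩

lemma parentV_root : parentV ends v₀ v₀ = v₀ := by
  rw [parentV, dif_neg]
  simp

lemma iter_parentV_eq_root :
    ∀ d : ℕ, ∀ u : V, (∃ r, u ∈ ball ends v₀ r) → depth ends v₀ u ≤ d →
      (parentV ends v₀)^[d] u = v₀ := by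
  intro d
  induction d with
  | zero =>
    intro u h hd
    have h0 : depth ends v₀ u = 0 := by omega
    have := mem_ball_depth ends v₀ h
    rw [h0] at this
    simpa [ball] using this
  | succ d ih =>
    intro u h hd
    by_cases hne : u = v₀
    · rw [hne, Function.iterate_succ_apply, parentV_root]
      exact ih v₀ ⟨0, by simp [ball]⟩ (by rw [depth_root]; omega)
    · rw [Function.iterate_succ_apply]
      refine ih _ (parentV_hasDepth ends v₀ h hne) ?_
      have := depth_parentV_lt ends v₀ h hne
      omega

lemma iter_parentV_hasDepth_le :
    ∀ k : ℕ, ∀ u : V, (∃ r, u ∈ ball ends v₀ r) →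
      (∃ r, (parentV ends v₀)^[k] u ∈ ball ends v₀ r) ∧
        depth ends v₀ ((parentV ends v₀)^[k] u) ≤ depth ends v₀ u := by
  intro k
  induction k with
  | zero => intro u h; simp only [Function.iterate_zero_apply]; exact ⟨h, le_refl _⟩
  | succ k ih =>
    intro u h
    obtain ⟨h1, h2⟩ := ih u h
    rw [Function.iterate_succ_apply']
    by_cases hne : (parentV ends v₀)^[k] u = v₀
    · rw [hne, parentV_root]
      exact ⟨⟨0, by simp [ball]⟩, by rw [depth_root]; omega⟩
    · refine ⟨parentV_hasDepth ends v₀ h1 hne, ?_⟩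
      have := depth_parentV_lt ends v₀ h1 hne
      omega

/-- the path from `u` back to the root -/
noncomputable def pathTo (u : V) : Finset V :=
  (Finset.range (depth ends v₀ u + 1)).image (fun k => (parentV ends v₀)^[k] u)

lemma card_pathTo_le (u : V) : (pathTo ends v₀ u).card ≤ depth ends v₀ u + 1 :=
  (card_image_le).trans (by simp)

lemma self_mem_pathTo (u : V) : u ∈ pathTo ends v₀ u := by
  rw [pathTo]
  exact mem_image.2 ⟨0, by simp, by simp⟩

lemma root_mem_pathTo {u : V} (h : ∃ r, u ∈ ball ends v₀ r) :
    v₀ ∈ pathTo ends v₀ u := by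
  rw [pathTo]
  exact mem_image.2 ⟨depth ends v₀ u, by simp,
    iter_parentV_eq_root ends v₀ _ u h (le_refl _)⟩

lemma hasDepth_of_mem_pathTo {u w : V} (h : ∃ r, u ∈ ball ends v₀ r)
    (hw : w ∈ pathTo ends v₀ u) :
    (∃ r, w ∈ ball ends v₀ r) ∧ depth ends v₀ w ≤ depth ends v₀ u := by
  rw [pathTo] at hw
  obtain ⟨k, _, hk⟩ := mem_image.1 hw
  subst hk
  exact iter_parentV_hasDepth_le ends v₀ k u h

lemma pathTo_closed {u w : V} (h : ∃ r, u ∈ ball ends v₀ r)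
    (hw : w ∈ pathTo ends v₀ u) (hne : w ≠ v₀) :
    parentV ends v₀ w ∈ pathTo ends v₀ u := by
  rw [pathTo] at hw ⊢
  obtain ⟨k, hkr, hk⟩ := mem_image.1 hw
  simp only [mem_range] at hkr
  have hklt : k < depth ends v₀ u := by
    rcases Nat.lt_or_ge k (depth ends v₀ u) with h' | h'
    · exact h'
    · exfalso
      have hk' : k = depth ends v₀ u := by omega
      subst hk'
      exact hne (hk ▸ iter_parentV_eq_root ends v₀ _ u h (le_refl _))
  refine mem_image.2 ⟨k + 1, by simp [mem_range]; omega, ?_⟩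
  rw [Function.iterate_succ_apply', hk]

lemma mem_ball_of_mem_pathTo {u w : V} {r : ℕ} (h : ∃ s, u ∈ ball ends v₀ s)
    (hu : u ∈ ball ends v₀ r) (hw : w ∈ pathTo ends v₀ u) :
    w ∈ ball ends v₀ r := by
  obtain ⟨h1, h2⟩ := hasDepth_of_mem_pathTo ends v₀ h hw
  have h3 := mem_ball_depth ends v₀ h1
  have h4 : depth ends v₀ u ≤ r := depth_le_of_mem ends v₀ hu
  exact ball_mono ends v₀ (by omega) h3

end Depth

end BF
namespace BF

section Count

variable {V : Type u} {ι : Type v} [DecidableEq V] [Fintype V] [Fintype ι]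
variable (ends : ι → V × V) (v₀ : V)

open scoped Classical

lemma parentE_injOn [Nonempty ι] (X : Finset V)
    (hX : ∀ w ∈ X, ∃ r, w ∈ ball ends v₀ r) (hv : v₀ ∉ X) :
    Set.InjOn (parentE ends v₀) X := by
  intro w₁ hw₁ w₂ hw₂ heq
  have hne₁ : w₁ ≠ v₀ := fun h => hv (h ▸ hw₁)
  have hne₂ : w₂ ≠ v₀ := fun h => hv (h ▸ hw₂)
  have s₁ := parent_spec ends v₀ (hX w₁ hw₁) hne₁
  have s₂ := parent_spec ends v₀ (hX w₂ hw₂) hne₂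
  have d₁ := depth_parentV_lt ends v₀ (hX w₁ hw₁) hne₁
  have d₂ := depth_parentV_lt ends v₀ (hX w₂ hw₂) hne₂
  rw [heq] at s₁
  by_contra hww
  rcases s₁.2 with h1 | h1 <;> rcases s₂.2 with h2 | h2 <;> rw [h1] at h2
  · exact hww (congrArg Prod.snd h2)
  · have e1 : parentV ends v₀ w₁ = w₂ := congrArg Prod.fst h2
    have e2 : w₁ = parentV ends v₀ w₂ := congrArg Prod.snd h2
    rw [e1] at d₁; rw [← e2] at d₂; omega
  · have e1 : w₁ = parentV ends v₀ w₂ := congrArg Prod.fst h2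
    have e2 : parentV ends v₀ w₁ = w₂ := congrArg Prod.snd h2
    rw [e2] at d₁; rw [← e1] at d₂; omega
  · exact hww (congrArg Prod.fst h2)

lemma parents_card_le [Nonempty ι] (B : Finset V) (hv : v₀ ∈ B)
    (hB : ∀ w ∈ B, ∃ r, w ∈ ball ends v₀ r) :
    ((B.erase v₀).image (parentE ends v₀)).card ≤ B.card - 1 := by
  calc ((B.erase v₀).image (parentE ends v₀)).card ≤ (B.erase v₀).card :=
        card_image_le
    _ = B.card - 1 := card_erase_of_mem hv

lemma parents_inter_eIn_subset [Nonempty ι] (B C : Finset V) (hBC : B ⊆ C)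
    (hC : ∀ w ∈ C, ∃ r, w ∈ ball ends v₀ r) :
    ((C.erase v₀).image (parentE ends v₀)) ∩ (eIn ends B) ⊆
      (B.erase v₀).image (parentE ends v₀) := by
  intro e he
  rw [mem_inter] at he
  obtain ⟨hP, hIn⟩ := he
  obtain ⟨w, hw, hwe⟩ := mem_image.1 hP
  have hwC := mem_of_mem_erase hw
  have hwne : w ≠ v₀ := ne_of_mem_erase hw
  have spec := parent_spec ends v₀ (hC w hwC) hwne
  rw [hwe] at spec
  simp only [eIn, mem_filter, mem_univ, true_and] at hIn
  have hwB : w ∈ B := by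
    rcases spec.2 with h | h
    · have : (ends e).2 = w := by rw [h]
      exact this ▸ hIn.2
    · have : (ends e).1 = w := by rw [h]
      exact this ▸ hIn.1
  exact mem_image.2 ⟨w, mem_erase.2 ⟨hwne, hwB⟩, hwe⟩

/-- the central edge-counting lemma: a parent-closed set `X` containing two
non-parental edges inside it spans more edges than vertices. -/
lemma card_add_one_le_card_eIn [Nonempty ι] (X : Finset V) (hv₀ : v₀ ∈ X)
    (hX : ∀ w ∈ X, ∃ r, w ∈ ball ends v₀ r)
    (hcl : ∀ w ∈ X, w ≠ v₀ → parentV ends v₀ w ∈ X)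
    (e₁ e₂ : ι) (hne : e₁ ≠ e₂)
    (h₁ : e₁ ∈ eIn ends X) (h₂ : e₂ ∈ eIn ends X)
    (hp : ∀ w ∈ X, w ≠ v₀ → parentE ends v₀ w ≠ e₁ ∧ parentE ends v₀ w ≠ e₂) :
    X.card + 1 ≤ (eIn ends X).card := by
  set F : Finset ι := (X.erase v₀).image (parentE ends v₀) with hF
  have hFcard : F.card = X.card - 1 := by
    rw [hF, card_image_of_injOn, card_erase_of_mem hv₀]
    exact parentE_injOn ends v₀ _ (fun w hw => hX w (mem_of_mem_erase hw))
      (notMem_erase _ _)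
  have hFsub : F ⊆ eIn ends X := by
    intro e he
    obtain ⟨w, hw, hwe⟩ := mem_image.1 he
    have hwX := mem_of_mem_erase hw
    have hwne : w ≠ v₀ := ne_of_mem_erase hw
    have spec := parent_spec ends v₀ (hX w hwX) hwne
    rw [hwe] at spec
    have hpv : parentV ends v₀ w ∈ X := hcl w hwX hwne
    simp only [eIn, mem_filter, mem_univ, true_and]
    rcases spec.2 with h | h <;> rw [h] <;> exact ⟨by assumption, by assumption⟩
  have he₁F : e₁ ∉ F := by
    intro hc
    obtain ⟨w, hw, hwe⟩ := mem_image.1 hc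
    exact (hp w (mem_of_mem_erase hw) (ne_of_mem_erase hw)).1 hwe
  have he₂F : e₂ ∉ F := by
    intro hc
    obtain ⟨w, hw, hwe⟩ := mem_image.1 hc
    exact (hp w (mem_of_mem_erase hw) (ne_of_mem_erase hw)).2 hwe
  have hsub : insert e₁ (insert e₂ F) ⊆ eIn ends X := by
    intro e he
    rcases mem_insert.1 he with rfl | he'
    · exact h₁
    rcases mem_insert.1 he' with rfl | he''
    · exact h₂
    exact hFsub he''
  have hcard : (insert e₁ (insert e₂ F)).card = F.card + 2 := by
    rw [card_insert_of_notMem, card_insert_of_notMem he₂F]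
    intro hc
    rcases mem_insert.1 hc with h | h
    · exact hne h
    · exact he₁F h
  have hXpos : 1 ≤ X.card := card_pos.2 ⟨v₀, hv₀⟩
  have := card_le_card hsub
  omega

lemma card_union4_le {A B C D : Finset V} {x : V}
    (hA : x ∈ A) (hB : x ∈ B) (hC : x ∈ C) (hD : x ∈ D) :
    (A ∪ B ∪ C ∪ D).card + 3 ≤ A.card + B.card + C.card + D.card := by
  have key : ∀ (s t : Finset V), x ∈ s → x ∈ t → (s ∪ t).card + 1 ≤ s.card + t.card := by
    intro s t hs ht
    have h1 : 1 ≤ (s ∩ t).card := card_pos.2 ⟨x, mem_inter.2 ⟨hs, ht⟩⟩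
    have h2 := card_union_add_card_inter s t
    omega
  have h1 := key A B hA hB
  have h2 := key (A ∪ B) C (mem_union_left _ hA) hC
  have h3 := key (A ∪ B ∪ C) D (mem_union_left _ (mem_union_left _ hA)) hD
  omega

end Count

end BF
namespace BF

section Extract

variable {V : Type u} {ι : Type v} [DecidableEq V] [Fintype V] [Fintype ι]
variable (ends : ι → V × V) (v₀ : V)

open scoped Classical

lemma extract [Nonempty ι] (r₁ r₀ : ℕ) (hle : r₁ ≤ r₀)
    (hE₁ : (ball ends v₀ r₁).card ≤ (eIn ends (ball ends v₀ r₁)).card)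
    (hE₀ : (ball ends v₀ r₀).card + 1 ≤ (eIn ends (ball ends v₀ r₀)).card) :
    ∃ X : Finset V, X.card ≤ 2 * r₁ + 2 * r₀ + 1 ∧ X.card + 1 ≤ (eIn ends X).card := by
  set B₁ := ball ends v₀ r₁ with hB₁
  set B₀ := ball ends v₀ r₀ with hB₀
  have hsub : B₁ ⊆ B₀ := ball_mono ends v₀ hle
  have hD₀ : ∀ w ∈ B₀, ∃ r, w ∈ ball ends v₀ r := fun w hw => ⟨r₀, hw⟩
  have hv₁ : v₀ ∈ B₁ := root_mem_ball ends v₀ r₁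
  have hv₀ : v₀ ∈ B₀ := root_mem_ball ends v₀ r₀
  set P : Finset ι := (B₀.erase v₀).image (parentE ends v₀) with hP
  have hPcard : P.card ≤ B₀.card - 1 := parents_card_le ends v₀ B₀ hv₀ hD₀
  -- choose e₁
  have hne₁ : (eIn ends B₁ \ P).Nonempty := by
    rw [sdiff_nonempty]
    intro hcon
    have h1 : eIn ends B₁ ⊆ (B₁.erase v₀).image (parentE ends v₀) := by
      intro e he
      exact parents_inter_eIn_subset ends v₀ B₁ B₀ hsub hD₀
        (mem_inter.2 ⟨hcon he, he⟩)
    have h2 := card_le_card h1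
    have h3 : ((B₁.erase v₀).image (parentE ends v₀)).card ≤ B₁.card - 1 :=
      parents_card_le ends v₀ B₁ hv₁ (fun w hw => ⟨r₁, hw⟩)
    have h4 : 1 ≤ B₁.card := card_pos.2 ⟨v₀, hv₁⟩
    omega
  obtain ⟨e₁, he₁⟩ := hne₁
  rw [mem_sdiff] at he₁
  -- choose e₂
  have hne₂ : (eIn ends B₀ \ insert e₁ P).Nonempty := by
    rw [sdiff_nonempty]
    intro hcon
    have h2 := card_le_card hcon
    have h3 : (insert e₁ P).card ≤ P.card + 1 := card_insert_le _ _
    have h4 : 1 ≤ B₀.card := card_pos.2 ⟨v₀, hv₀⟩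
    omega
  obtain ⟨e₂, he₂⟩ := hne₂
  rw [mem_sdiff, mem_insert] at he₂
  push_neg at he₂
  obtain ⟨he₂In, he₂ne, he₂P⟩ := he₂
  -- the four endpoints
  have he₁In := he₁.1
  simp only [eIn, mem_filter, mem_univ, true_and] at he₁In he₂In
  set a₁ := (ends e₁).1 with ha₁
  set b₁ := (ends e₁).2 with hb₁
  set a₂ := (ends e₂).1 with ha₂
  set b₂ := (ends e₂).2 with hb₂
  have hda₁ : ∃ r, a₁ ∈ ball ends v₀ r := ⟨r₁, he₁In.1⟩
  have hdb₁ : ∃ r, b₁ ∈ ball ends v₀ r := ⟨r₁, he₁In.2⟩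
  have hda₂ : ∃ r, a₂ ∈ ball ends v₀ r := ⟨r₀, he₂In.1⟩
  have hdb₂ : ∃ r, b₂ ∈ ball ends v₀ r := ⟨r₀, he₂In.2⟩
  set X := pathTo ends v₀ a₁ ∪ pathTo ends v₀ b₁ ∪ pathTo ends v₀ a₂ ∪ pathTo ends v₀ b₂
    with hX
  have hXsub : X ⊆ B₀ := by
    intro w hw
    rw [hX] at hw
    rcases mem_union.1 hw with hw' | hw'
    · rcases mem_union.1 hw' with hw'' | hw''
      · rcases mem_union.1 hw'' with hw3 | hw3
        · exact mem_ball_of_mem_pathTo ends v₀ hda₁ (hsub he₁In.1) hw3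
        · exact mem_ball_of_mem_pathTo ends v₀ hdb₁ (hsub he₁In.2) hw3
      · exact mem_ball_of_mem_pathTo ends v₀ hda₂ he₂In.1 hw''
    · exact mem_ball_of_mem_pathTo ends v₀ hdb₂ he₂In.2 hw'
  have hv₀X : v₀ ∈ X := by
    rw [hX]
    exact mem_union_left _ (mem_union_left _ (mem_union_left _
      (root_mem_pathTo ends v₀ hda₁)))
  have hXD : ∀ w ∈ X, ∃ r, w ∈ ball ends v₀ r := fun w hw => ⟨r₀, hXsub hw⟩
  have hXcl : ∀ w ∈ X, w ≠ v₀ → parentV ends v₀ w ∈ X := by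
    intro w hw hwne
    rw [hX] at hw ⊢
    rcases mem_union.1 hw with hw' | hw'
    · rcases mem_union.1 hw' with hw'' | hw''
      · rcases mem_union.1 hw'' with hw3 | hw3
        · exact mem_union_left _ (mem_union_left _ (mem_union_left _
            (pathTo_closed ends v₀ hda₁ hw3 hwne)))
        · exact mem_union_left _ (mem_union_left _ (mem_union_right _
            (pathTo_closed ends v₀ hdb₁ hw3 hwne)))
      · exact mem_union_left _ (mem_union_right _
          (pathTo_closed ends v₀ hda₂ hw'' hwne))
    · exact mem_union_right _ (pathTo_closed ends v₀ hdb₂ hw' hwne)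
  have hpX : ∀ w ∈ X, w ≠ v₀ → parentE ends v₀ w ≠ e₁ ∧ parentE ends v₀ w ≠ e₂ := by
    intro w hw hwne
    have hwP : parentE ends v₀ w ∈ P :=
      mem_image.2 ⟨w, mem_erase.2 ⟨hwne, hXsub hw⟩, rfl⟩
    constructor
    · intro hc; exact he₁.2 (hc ▸ hwP)
    · intro hc; exact he₂P (hc ▸ hwP)
  have he₁X : e₁ ∈ eIn ends X := by
    simp only [eIn, mem_filter, mem_univ, true_and]
    constructor
    · exact hX ▸ mem_union_left _ (mem_union_left _ (mem_union_left _
        (self_mem_pathTo ends v₀ a₁)))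
    · exact hX ▸ mem_union_left _ (mem_union_left _ (mem_union_right _
        (self_mem_pathTo ends v₀ b₁)))
  have he₂X : e₂ ∈ eIn ends X := by
    simp only [eIn, mem_filter, mem_univ, true_and]
    constructor
    · exact hX ▸ mem_union_left _ (mem_union_right _ (self_mem_pathTo ends v₀ a₂))
    · exact hX ▸ mem_union_right _ (self_mem_pathTo ends v₀ b₂)
  have hdense : X.card + 1 ≤ (eIn ends X).card :=
    card_add_one_le_card_eIn ends v₀ X hv₀X hXD hXcl e₁ e₂ (Ne.symm he₂ne) he₁X he₂X hpX
  -- size bound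
  have hsize : X.card ≤ 2 * r₁ + 2 * r₀ + 1 := by
    have hu := card_union4_le (x := v₀)
      (root_mem_pathTo ends v₀ hda₁) (root_mem_pathTo ends v₀ hdb₁)
      (root_mem_pathTo ends v₀ hda₂) (root_mem_pathTo ends v₀ hdb₂)
    have c1 : (pathTo ends v₀ a₁).card ≤ r₁ + 1 := by
      have := card_pathTo_le ends v₀ a₁
      have := depth_le_of_mem ends v₀ he₁In.1
      omega
    have c2 : (pathTo ends v₀ b₁).card ≤ r₁ + 1 := by
      have := card_pathTo_le ends v₀ b₁
      have := depth_le_of_mem ends v₀ he₁In.2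
      omega
    have c3 : (pathTo ends v₀ a₂).card ≤ r₀ + 1 := by
      have := card_pathTo_le ends v₀ a₂
      have := depth_le_of_mem ends v₀ he₂In.1
      omega
    have c4 : (pathTo ends v₀ b₂).card ≤ r₀ + 1 := by
      have := card_pathTo_le ends v₀ b₂
      have := depth_le_of_mem ends v₀ he₂In.2
      omega
    rw [hX]
    omega
  exact ⟨X, hsize, hdense⟩

end Extract

end BF
namespace BF

set_option maxHeartbeats 1000000

section Numeric

open Real

lemma hpos {h : ℕ} (hh : 1 ≤ h) : (0:ℝ) < h := by
  have : (1:ℝ) ≤ h := by exact_mod_cast hh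
  linarith

lemma theta_eq {h : ℕ} (hh : 1 ≤ h) : ((h:ℝ)+1)/h = 1 + 1/h := by
  have h0 := hpos hh
  field_simp

lemma one_lt_theta {h : ℕ} (hh : 1 ≤ h) : 1 < ((h:ℝ)+1)/h := by
  have h0 := hpos hh
  rw [lt_div_iff₀ h0]
  linarith

lemma theta_pos {h : ℕ} (hh : 1 ≤ h) : 0 < ((h:ℝ)+1)/h :=
  lt_trans one_pos (one_lt_theta hh)

lemma two_le_theta_pow (h : ℕ) (hh : 1 ≤ h) :
    (2:ℝ) ≤ (((h:ℝ)+1)/h)^h := by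
  have h0 := hpos hh
  rw [theta_eq hh]
  have key := one_add_mul_le_pow (a := 1/(h:ℝ))
    (le_trans (by norm_num : (-2:ℝ) ≤ 0) (by positivity)) h
  have : (h:ℝ) * (1/h) = 1 := by field_simp
  rw [this] at key
  linarith

/-- from `θ^k ≤ y` deduce `k ≤ h · log₂ y` -/
lemma le_h_mul_logb {h : ℕ} (hh : 1 ≤ h) (k : ℕ) {y : ℝ} (hy : 1 ≤ y)
    (hk : (((h:ℝ)+1)/h)^k ≤ y) : (k:ℝ) ≤ h * Real.logb 2 y := by
  have h0 := hpos hh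
  have hθ := theta_pos hh
  have hlog2 : (0:ℝ) < Real.log 2 := Real.log_pos (by norm_num)
  have l1 : Real.log 2 ≤ (h:ℝ) * Real.log (((h:ℝ)+1)/h) := by
    have := Real.log_le_log (by norm_num) (two_le_theta_pow h hh)
    rwa [Real.log_pow] at this
  have l2 : (k:ℝ) * Real.log (((h:ℝ)+1)/h) ≤ Real.log y := by
    have := Real.log_le_log (pow_pos hθ k) hk
    rwa [Real.log_pow] at this
  have l3 : (k:ℝ) * Real.log 2 ≤ (h:ℝ) * Real.log y := by
    calc (k:ℝ) * Real.log 2 ≤ (k:ℝ) * ((h:ℝ) * Real.log (((h:ℝ)+1)/h)) := by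
          apply mul_le_mul_of_nonneg_left l1 (by positivity)
      _ = (h:ℝ) * ((k:ℝ) * Real.log (((h:ℝ)+1)/h)) := by ring
      _ ≤ (h:ℝ) * Real.log y := by
          apply mul_le_mul_of_nonneg_left l2 (le_of_lt h0)
  rw [Real.logb, ← mul_div_assoc, le_div_iff₀ hlog2]
  linarith

lemma lt_mul_logb_of_pow_lt (a b : ℕ) {u : ℝ} (hu : 1 ≤ u)
    (hab : (2:ℝ)^a < u^b) : (a:ℝ) < b * Real.logb 2 u := by
  have hlog2 : (0:ℝ) < Real.log 2 := Real.log_pos (by norm_num)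
  have l1 : Real.log ((2:ℝ)^a) < Real.log (u^b) :=
    Real.log_lt_log (by positivity) hab
  rw [Real.log_pow, Real.log_pow] at l1
  rw [Real.logb, ← mul_div_assoc, lt_div_iff₀ hlog2]
  push_cast
  linarith

lemma logb_nonneg_of_one_le {u : ℝ} (hu : 1 ≤ u) : 0 ≤ Real.logb 2 u :=
  Real.logb_nonneg (by norm_num) hu

lemma logb_mono {u v : ℝ} (hu : 0 < u) (huv : u ≤ v) :
    Real.logb 2 u ≤ Real.logb 2 v := by
  have := Real.log_le_log hu huv
  have hlog2 : (0:ℝ) < Real.log 2 := Real.log_pos (by norm_num)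
  rw [Real.logb, Real.logb]
  exact div_le_div_of_nonneg_right this hlog2.le

/-- case C2 : pure tree phase -/
lemma finalC2 {h x n : ℕ} (hh : 1 ≤ h) (h16 : 16 ≤ n)
    (C2 : ((h:ℝ)+2) * (((h:ℝ)+1)/h)^x ≤ (n:ℝ) + h + 1) :
    (4*(x:ℝ) + 5) < 4*h*Real.logb 2 n := by
  have h0 := hpos hh
  have hn0 : (16:ℝ) ≤ n := by exact_mod_cast h16
  have hh1 : (1:ℝ) ≤ h := by exact_mod_cast hh
  set y : ℝ := ((n:ℝ) + h + 1)/((h:ℝ)+2) with hy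
  have hy1 : (1:ℝ) ≤ y := by
    rw [hy, le_div_iff₀ (by linarith)]
    linarith
  have hθx : (((h:ℝ)+1)/h)^x ≤ y := by
    rw [hy, le_div_iff₀ (by linarith)]
    linarith [C2]
  have hxle : (x:ℝ) ≤ h * Real.logb 2 y := le_h_mul_logb hh x hy1 hθx
  set w : ℝ := (n:ℝ)*((h:ℝ)+2)/((n:ℝ)+h+1) with hw
  have hwge : (48:ℝ)/19 ≤ w := by
    rw [hw, div_le_div_iff₀ (by norm_num) (by linarith)]
    nlinarith [mul_nonneg (sub_nonneg.2 hn0) (sub_nonneg.2 hh1)]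
  have hw1 : (1:ℝ) ≤ w := by linarith
  have h5 : (5:ℝ) < 4*(h:ℝ)*Real.logb 2 w := by
    have l1 : (5:ℝ) < 4 * Real.logb 2 ((48:ℝ)/19) := by
      apply lt_mul_logb_of_pow_lt 5 4 (by norm_num)
      norm_num
    have l2 : Real.logb 2 ((48:ℝ)/19) ≤ Real.logb 2 w := logb_mono (by norm_num) hwge
    have l3 : (0:ℝ) ≤ Real.logb 2 w := logb_nonneg_of_one_le hw1
    nlinarith
  have hylog : Real.logb 2 y = Real.logb 2 n - Real.logb 2 w := by
    have hyw : y = (n:ℝ)/w := by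
      rw [hy, hw]
      field_simp
    rw [hyw, Real.logb_div (by linarith) (by linarith)]
  rw [hylog] at hxle
  nlinarith

/-- case C1 -/
lemma finalC1 {h p x n : ℕ} (hh : 1 ≤ h) (h16 : 16 ≤ n) (h16h : 16*(h:ℝ) ≤ n)
    (hpx : p ≤ x)
    (C1 : (((h:ℝ)+1)/h)^(x-p) * (((h:ℝ)+2) * (((h:ℝ)+1)/h)^p - ((h:ℝ)+1)) ≤ (n:ℝ) + 1) :
    (2*(p:ℝ) + 2*x + 3) < 4*h*Real.logb 2 n := by
  have h0 := hpos hh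
  have hn0 : (16:ℝ) ≤ n := by exact_mod_cast h16
  have hh1 : (1:ℝ) ≤ h := by exact_mod_cast hh
  set θ : ℝ := ((h:ℝ)+1)/h with hθdef
  have hθ1 : 1 < θ := one_lt_theta hh
  have hθ0 : 0 < θ := theta_pos hh
  have hθp1 : 1 ≤ θ^p := one_le_pow₀ (le_of_lt hθ1)
  have hpow_add : θ^(x-p) * θ^p = θ^x := by
    rw [← pow_add]
    congr 1
    omega
  by_cases hI : θ^p ≤ (h:ℝ)+1
  · -- case I
    have key : θ^(x+p) ≤ (n:ℝ)+1 := by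
      have k1 : (θ^p)^2 ≤ ((h:ℝ)+2) * θ^p - ((h:ℝ)+1) := by
        nlinarith [mul_nonneg (sub_nonneg.2 hθp1) (sub_nonneg.2 hI)]
      have k2 : θ^(x-p) * (θ^p)^2 ≤ (n:ℝ)+1 := by
        have := mul_le_mul_of_nonneg_left k1 (le_of_lt (pow_pos hθ0 (x-p)))
        linarith
      have k3 : θ^(x-p) * (θ^p)^2 = θ^(x+p) := by
        rw [← pow_mul, ← pow_add]
        congr 1
        omega
      linarith [k3 ▸ k2]
    have hxp : ((x+p : ℕ):ℝ) ≤ h * Real.logb 2 ((n:ℝ)+1) := by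
      apply le_h_mul_logb hh (x+p) (by linarith)
      rw [← hθdef]
      exact key
    have hu : (256:ℝ)/17 ≤ (n:ℝ)^2/((n:ℝ)+1) := by
      rw [div_le_div_iff₀ (by norm_num) (by linarith)]
      nlinarith [mul_nonneg (sub_nonneg.2 hn0) (sub_nonneg.2 hn0)]
    have hlogu : (3:ℝ) < 2*(h:ℝ)*(2*Real.logb 2 n - Real.logb 2 ((n:ℝ)+1)) := by
      have l0 : Real.logb 2 ((n:ℝ)^2/((n:ℝ)+1)) = 2*Real.logb 2 n - Real.logb 2 ((n:ℝ)+1) := by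
        rw [Real.logb_div (by positivity) (by linarith), Real.logb_pow]
        push_cast
        ring
      have l1 : (3:ℝ) < 2 * Real.logb 2 ((256:ℝ)/17) := by
        apply lt_mul_logb_of_pow_lt 3 2 (by norm_num)
        norm_num
      have l2 : Real.logb 2 ((256:ℝ)/17) ≤ Real.logb 2 ((n:ℝ)^2/((n:ℝ)+1)) :=
        logb_mono (by norm_num) hu
      have l3 : (0:ℝ) ≤ Real.logb 2 ((256:ℝ)/17) := logb_nonneg_of_one_le (by norm_num)
      rw [l0] at l2
      nlinarith
    have hcast : ((x+p:ℕ):ℝ) = (x:ℝ) + p := by push_cast; ring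
    rw [hcast] at hxp
    nlinarith
  · -- case II
    push_neg at hI
    by_cases hq : 2*((h:ℝ)+1)*θ^(x-p) ≤ (n:ℝ)+1
    · -- subcase IIb1
      have hXx : ((h:ℝ)+2)*θ^x ≤ (3/2)*((n:ℝ)+1) := by
        have exp1 : ((h:ℝ)+2)*θ^x = θ^(x-p) * (((h:ℝ)+2) * θ^p) := by
          rw [← mul_assoc, mul_comm (θ^(x-p)) _, mul_assoc, hpow_add]
        have exp2 : θ^(x-p) * (((h:ℝ)+2) * θ^p)
            = θ^(x-p) * (((h:ℝ)+2) * θ^p - ((h:ℝ)+1)) + ((h:ℝ)+1)*θ^(x-p) := by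
          ring
        rw [exp1, exp2]
        linarith
      set y : ℝ := 3*((n:ℝ)+1)/(2*((h:ℝ)+2)) with hy
      have hy1 : (1:ℝ) ≤ y := by
        rw [hy, le_div_iff₀ (by linarith)]
        linarith
      have hθx : θ^x ≤ y := by
        rw [hy, le_div_iff₀ (by linarith)]
        linarith
      have hxle : (x:ℝ) ≤ h * Real.logb 2 y := le_h_mul_logb hh x hy1 hθx
      set w : ℝ := 2*((h:ℝ)+2)*(n:ℝ)/(3*((n:ℝ)+1)) with hw
      have hwge : (32:ℝ)/17 ≤ w := by
        rw [hw, div_le_div_iff₀ (by norm_num) (by linarith)]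
        nlinarith [mul_nonneg (sub_nonneg.2 hh1) (by linarith : (0:ℝ) ≤ (n:ℝ))]
      have hw1 : (1:ℝ) ≤ w := by linarith
      have h3 : (3:ℝ) < 4*(h:ℝ)*Real.logb 2 w := by
        have l1 : (3:ℝ) < 4 * Real.logb 2 ((32:ℝ)/17) := by
          apply lt_mul_logb_of_pow_lt 3 4 (by norm_num)
          norm_num
        have l2 : Real.logb 2 ((32:ℝ)/17) ≤ Real.logb 2 w := logb_mono (by norm_num) hwge
        have l3 : (0:ℝ) ≤ Real.logb 2 w := logb_nonneg_of_one_le hw1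
        nlinarith
      have hylog : Real.logb 2 y = Real.logb 2 n - Real.logb 2 w := by
        have hyw : y = (n:ℝ)/w := by
          rw [hy, hw]
          field_simp
        rw [hyw, Real.logb_div (by linarith) (by linarith)]
      rw [hylog] at hxle
      have hple : (p:ℝ) ≤ x := by exact_mod_cast hpx
      nlinarith
    · -- subcase IIb2 : contradiction
      exfalso
      push_neg at hq
      have hx0 : (0:ℝ) < θ^(x-p) := pow_pos hθ0 _
      have k1 : θ^(x-p) * (((h:ℝ)+2) * θ^p) < 3*((h:ℝ)+1)*θ^(x-p) := by
        have exp2 : θ^(x-p) * (((h:ℝ)+2) * θ^p)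
            = θ^(x-p) * (((h:ℝ)+2) * θ^p - ((h:ℝ)+1)) + ((h:ℝ)+1)*θ^(x-p) := by
          ring
        rw [exp2]
        linarith
      have k2 : ((h:ℝ)+2) * θ^p < 3*((h:ℝ)+1) := by
        have := (mul_lt_mul_iff_right₀ hx0).1 (by linarith [k1] :
          θ^(x-p) * (((h:ℝ)+2) * θ^p) < θ^(x-p) * (3*((h:ℝ)+1)))
        linarith
      nlinarith

end Numeric

end BF
namespace BF

set_option maxHeartbeats 1600000

open Real

lemma small_n_lt {n : ℕ} (h2 : 2 ≤ n) (h15 : n ≤ 15) : (n:ℝ) < 4 * Real.logb 2 n := by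
  have h1 : (1:ℝ) ≤ (n:ℝ) := by exact_mod_cast Nat.one_le_of_lt h2
  have key : (2:ℝ)^n < (n:ℝ)^4 := by
    interval_cases n <;> norm_num
  have := lt_mul_logb_of_pow_lt n 4 h1 key
  exact this

lemma logb_sixteen : Real.logb 2 16 = 4 := by
  rw [show (16:ℝ) = 2^4 by norm_num, Real.logb_pow]
  simp [Real.logb_self_eq_one]

lemma core (N : ℕ) : ∀ (V : Type u) (ι : Type v) [DecidableEq V] [Fintype V] [Fintype ι]
    (ends : ι → V × V) (h : ℕ), 1 ≤ h → Fintype.card V ≤ N → 2 ≤ Fintype.card V →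
    ((h + 1 : ℝ) / h) * Fintype.card V ≤ Fintype.card ι →
    ∃ X : Finset V, (X.card : ℝ) < 4 * h * Real.logb 2 (Fintype.card V) ∧
      X.card < (eIn ends X).card := by
  induction N with
  | zero =>
    intro V ι _ _ _ ends h hh hcard hn2 hE
    omega
  | succ N IH =>
    intro V ι _ _ _ ends h hh hcard hn2 hE
    classical
    have h0 : (0:ℝ) < h := hpos hh
    have hh1 : (1:ℝ) ≤ h := by exact_mod_cast hh
    set n := Fintype.card V with hn
    set m := Fintype.card ι with hm
    have hRmn : ((h:ℝ)+1) * n ≤ h * m := by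
      rw [div_mul_eq_mul_div, div_le_iff₀ h0] at hE
      push_cast at hE ⊢
      linarith
    have hnm : n < m := by
      by_contra hcon
      push_neg at hcon
      have : (m:ℝ) ≤ n := by exact_mod_cast hcon
      have h2 : (2:ℝ) ≤ n := by exact_mod_cast hn2
      nlinarith
    have hLpos : 0 < Real.logb 2 n := by
      apply Real.logb_pos (by norm_num)
      have : (2:ℝ) ≤ n := by exact_mod_cast hn2
      linarith
    by_cases hc : (n:ℝ) < 4 * h * Real.logb 2 n
    · -- easy case : take everything
      refine ⟨Finset.univ, ?_, ?_⟩
      · simpa using hc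
      · have : eIn ends (Finset.univ : Finset V) = Finset.univ := by
          simp [eIn]
        rw [this]
        simpa using hnm
    · -- hard case
      have hard : 4 * (h:ℝ) * Real.logb 2 n ≤ n := le_of_not_gt hc
      have h16 : 16 ≤ n := by
        by_contra hcon
        push_neg at hcon
        have hs := small_n_lt hn2 (by omega)
        have hl0 : 0 ≤ Real.logb 2 n := le_of_lt hLpos
        nlinarith
      have hL4 : (4:ℝ) ≤ Real.logb 2 n := by
        rw [← logb_sixteen]
        apply logb_mono (by norm_num)
        exact_mod_cast h16
      have h16h : 16*(h:ℝ) ≤ n := by nlinarith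
      -- root vertex
      have : Nonempty V := Fintype.card_pos_iff.1 (by omega)
      obtain ⟨v₀⟩ := this
      -- event scan
      set ev : ℕ → Prop := fun r =>
        (ball ends v₀ r).card < (eIn ends (ball ends v₀ r)).card ∨
        h * (eTouch ends (ball ends v₀ r)).card ≤ (h+1) * (ball ends v₀ r).card
        with hev_def
      have hev : ∃ r, ev r := by
        by_contra hno
        push_neg at hno
        have grow : ∀ r, r + 1 ≤ (ball ends v₀ r).card := by
          intro r
          induction r with
          | zero => simp [ball]
          | succ r ih =>
            have hne := hno r
            have hne1 := hno (r+1)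
            simp only [hev_def] at hne hne1
            push_neg at hne hne1
            have hT : (eTouch ends (ball ends v₀ r)).card ≤
                (eIn ends (ball ends v₀ (r+1))).card :=
              card_le_card (eTouch_subset_eIn_succ ends v₀ r)
            have hd1 : (eIn ends (ball ends v₀ (r+1))).card ≤ (ball ends v₀ (r+1)).card :=
              hne1.1
            have htr : (h+1) * (ball ends v₀ r).card < h * (eTouch ends (ball ends v₀ r)).card :=
              hne.2
            have hTgt : (ball ends v₀ r).card < (eTouch ends (ball ends v₀ r)).card := by
              have h1 : h * (ball ends v₀ r).card ≤ (h+1) * (ball ends v₀ r).card :=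
                Nat.mul_le_mul_right _ (by omega)
              exact Nat.lt_of_mul_lt_mul_left (lt_of_le_of_lt h1 htr)
            omega
        have := grow n
        have hle := card_le_univ (ball ends v₀ n)
        rw [← hn] at hle
        omega
      set rs := Nat.find hev with hrs
      have hspec : ev rs := Nat.find_spec hev
      have hmin : ∀ r, r < rs → ¬ ev r := fun r hr => Nat.find_min hev hr
      by_cases hdense : (ball ends v₀ rs).card < (eIn ends (ball ends v₀ rs)).card
      · -- extraction case
        have hιne : Nonempty ι := by
          have hb0 : 0 < (ball ends v₀ rs).card :=
            card_pos.2 ⟨v₀, root_mem_ball ends v₀ rs⟩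
          have : 0 < (eIn ends (ball ends v₀ rs)).card := by omega
          obtain ⟨e, _⟩ := card_pos.1 this
          exact ⟨e⟩
        by_cases hr0 : rs = 0
        · refine ⟨{v₀}, ?_, ?_⟩
          · rw [card_singleton]
            push_cast
            nlinarith
          · rw [card_singleton]
            rw [hr0] at hdense
            have hb1 : (ball ends v₀ 0).card = 1 := by simp [ball]
            have heq : eIn ends (ball ends v₀ 0) = eIn ends ({v₀} : Finset V) := rfl
            rw [← heq]
            omega
        · obtain ⟨x, hx⟩ : ∃ x, rs = x + 1 := ⟨rs - 1, by omega⟩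
          have hstep : ∀ r, r < rs →
              (h+1) * (ball ends v₀ r).card + 1 ≤ h * (eTouch ends (ball ends v₀ r)).card := by
            intro r hr
            have := hmin r hr
            simp only [hev_def] at this
            push_neg at this
            exact this.2
          have hndense : ∀ r, r < rs →
              (eIn ends (ball ends v₀ r)).card ≤ (ball ends v₀ r).card := by
            intro r hr
            have := hmin r hr
            simp only [hev_def] at this
            push_neg at this
            exact this.1
          have hρex : ∃ r, (ball ends v₀ r).card ≤ (eIn ends (ball ends v₀ r)).card :=
            ⟨rs, le_of_lt hdense⟩
          set ρ := Nat.find hρex with hρdef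
          have hρspec : (ball ends v₀ ρ).card ≤ (eIn ends (ball ends v₀ ρ)).card :=
            Nat.find_spec hρex
          have hρle : ρ ≤ rs := Nat.find_le (le_of_lt hdense)
          have hρmin : ∀ r, r < ρ →
              (eIn ends (ball ends v₀ r)).card < (ball ends v₀ r).card := by
            intro r hr
            have := Nat.find_min hρex hr
            omega
          set θ : ℝ := ((h:ℝ)+1)/h with hθ
          have hθ0 : 0 < θ := by rw [hθ]; exact theta_pos hh
          have lemT : ∀ r, r ≤ x → r < ρ →
              ((h:ℝ)+2)*θ^r ≤ ((ball ends v₀ r).card : ℝ) + h + 1 := by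
            intro r
            induction r with
            | zero =>
              intro _ _
              have hb1 : (ball ends v₀ 0).card = 1 := by simp [ball]
              rw [pow_zero, mul_one, hb1]
              push_cast
              linarith
            | succ r ih =>
              intro hrx hrρ
              have ih' := ih (by omega) (by omega)
              have hstep' := hstep r (by omega)
              have htree := hρmin (r+1) hrρ
              have hTE : (eTouch ends (ball ends v₀ r)).card ≤
                  (eIn ends (ball ends v₀ (r+1))).card :=
                card_le_card (eTouch_subset_eIn_succ ends v₀ r)
              have hnat : (eTouch ends (ball ends v₀ r)).card + 1 ≤
                  (ball ends v₀ (r+1)).card := by omega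
              have c1 : ((h:ℝ)+1) * ((ball ends v₀ r).card:ℝ) + 1 ≤
                  (h:ℝ) * ((eTouch ends (ball ends v₀ r)).card:ℝ) := by
                exact_mod_cast hstep'
              have c2 : ((eTouch ends (ball ends v₀ r)).card:ℝ) + 1 ≤
                  ((ball ends v₀ (r+1)).card:ℝ) := by exact_mod_cast hnat
              have c3 : (h:ℝ) * (((eTouch ends (ball ends v₀ r)).card:ℝ) + 1) ≤
                  (h:ℝ) * ((ball ends v₀ (r+1)).card:ℝ) :=
                mul_le_mul_of_nonneg_left c2 h0.le
              have c4 : ((h:ℝ)+1) * ((ball ends v₀ r).card:ℝ) + 1 + h ≤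
                  (h:ℝ) * ((ball ends v₀ (r+1)).card:ℝ) := by nlinarith
              have e2 : (((h:ℝ)+2)*θ^r) * θ ≤ ((((ball ends v₀ r).card:ℝ)) + h + 1) * θ :=
                mul_le_mul_of_nonneg_right ih' hθ0.le
              have e3 : ((((ball ends v₀ r).card:ℝ)) + h + 1) * θ ≤
                  ((ball ends v₀ (r+1)).card:ℝ) + h + 1 := by
                rw [hθ, mul_div_assoc', div_le_iff₀ h0]
                nlinarith
              calc ((h:ℝ)+2)*θ^(r+1) = (((h:ℝ)+2)*θ^r) * θ := by ring
                _ ≤ ((((ball ends v₀ r).card:ℝ)) + h + 1) * θ := e2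
                _ ≤ ((ball ends v₀ (r+1)).card:ℝ) + h + 1 := e3
          have lemU : ∀ t, ρ + t ≤ x →
              (((ball ends v₀ ρ).card:ℝ) + 1) * θ^t ≤ ((ball ends v₀ (ρ+t)).card:ℝ) + 1 := by
            intro t
            induction t with
            | zero => intro _; simp
            | succ t ih =>
              intro hle
              have ih' := ih (by omega)
              have hstep' := hstep (ρ+t) (by omega)
              have hnd := hndense (ρ+t+1) (by omega)
              have hTE : (eTouch ends (ball ends v₀ (ρ+t))).card ≤
                  (eIn ends (ball ends v₀ (ρ+t+1))).card :=
                card_le_card (eTouch_subset_eIn_succ ends v₀ (ρ+t))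
              have hnat : (eTouch ends (ball ends v₀ (ρ+t))).card ≤
                  (ball ends v₀ (ρ+t+1)).card := le_trans hTE hnd
              have c1 : ((h:ℝ)+1) * ((ball ends v₀ (ρ+t)).card:ℝ) + 1 ≤
                  (h:ℝ) * ((eTouch ends (ball ends v₀ (ρ+t))).card:ℝ) := by
                exact_mod_cast hstep'
              have c2 : ((eTouch ends (ball ends v₀ (ρ+t))).card:ℝ) ≤
                  ((ball ends v₀ (ρ+t+1)).card:ℝ) := by exact_mod_cast hnat
              have c3 : (h:ℝ) * ((eTouch ends (ball ends v₀ (ρ+t))).card:ℝ) ≤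
                  (h:ℝ) * ((ball ends v₀ (ρ+t+1)).card:ℝ) :=
                mul_le_mul_of_nonneg_left c2 h0.le
              have c4 : ((h:ℝ)+1) * ((ball ends v₀ (ρ+t)).card:ℝ) + 1 ≤
                  (h:ℝ) * ((ball ends v₀ (ρ+t+1)).card:ℝ) := le_trans c1 c3
              have e2 : ((((ball ends v₀ ρ).card:ℝ)+1) * θ^t) * θ ≤
                  (((ball ends v₀ (ρ+t)).card:ℝ)+1) * θ :=
                mul_le_mul_of_nonneg_right ih' hθ0.le
              have e3 : (((ball ends v₀ (ρ+t)).card:ℝ)+1) * θ ≤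
                  ((ball ends v₀ (ρ+t+1)).card:ℝ) + 1 := by
                rw [hθ, mul_div_assoc', div_le_iff₀ h0]
                nlinarith
              have heq : ρ + (t+1) = (ρ + t) + 1 := rfl
              rw [heq]
              calc (((ball ends v₀ ρ).card:ℝ)+1) * θ^(t+1)
                  = ((((ball ends v₀ ρ).card:ℝ)+1) * θ^t) * θ := by ring
                _ ≤ (((ball ends v₀ (ρ+t)).card:ℝ)+1) * θ := e2
                _ ≤ ((ball ends v₀ (ρ+t+1)).card:ℝ) + 1 := e3
          obtain ⟨X, hXsize, hXdense⟩ := extract ends v₀ ρ rs hρle hρspec hdense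
          refine ⟨X, ?_, by omega⟩
          have hBxn : ((ball ends v₀ x).card : ℝ) ≤ (n:ℝ) := by
            have := card_le_univ (ball ends v₀ x)
            rw [← hn] at this
            exact_mod_cast this
          by_cases hρx : ρ ≤ x
          · have A1 : ((h:ℝ)+2)*θ^ρ - ((h:ℝ)+1) ≤ ((ball ends v₀ ρ).card:ℝ) + 1 := by
              rcases Nat.eq_zero_or_pos ρ with hρ0 | hρpos
              · rw [hρ0]
                have hb1 : (ball ends v₀ 0).card = 1 := by simp [ball]
                rw [pow_zero, mul_one, hb1]
                push_cast
                linarith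
              · obtain ⟨ρ', hρ'⟩ : ∃ ρ', ρ = ρ' + 1 := ⟨ρ - 1, by omega⟩
                have hT' := lemT ρ' (by omega) (by omega)
                have hstep' := hstep ρ' (by omega)
                have hnd := hndense ρ (by omega)
                have hTE : (eTouch ends (ball ends v₀ ρ')).card ≤
                    (eIn ends (ball ends v₀ (ρ'+1))).card :=
                  card_le_card (eTouch_subset_eIn_succ ends v₀ ρ')
                rw [← hρ'] at hTE
                have hnat : (eTouch ends (ball ends v₀ ρ')).card ≤
                    (ball ends v₀ ρ).card := le_trans hTE hnd
                have c1 : ((h:ℝ)+1) * ((ball ends v₀ ρ').card:ℝ) + 1 ≤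
                    (h:ℝ) * ((eTouch ends (ball ends v₀ ρ')).card:ℝ) := by
                  exact_mod_cast hstep'
                have c2 : ((eTouch ends (ball ends v₀ ρ')).card:ℝ) ≤
                    ((ball ends v₀ ρ).card:ℝ) := by exact_mod_cast hnat
                have c4 : ((h:ℝ)+1) * ((ball ends v₀ ρ').card:ℝ) + 1 ≤
                    (h:ℝ) * ((ball ends v₀ ρ).card:ℝ) := by nlinarith
                have hpow : θ^ρ = θ^ρ' * θ := by rw [hρ']; ring
                rw [hpow]
                have hbρ' : ((h:ℝ)+2)*θ^ρ' ≤ ((ball ends v₀ ρ').card:ℝ) + h + 1 := hT'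
                have hmul := mul_le_mul_of_nonneg_right hbρ' hθ0.le
                have hθh : (h:ℝ) * θ = (h:ℝ)+1 := by
                  rw [hθ]; field_simp
                have hfrac : (((ball ends v₀ ρ').card:ℝ) + h + 1) * θ ≤
                    ((ball ends v₀ ρ).card:ℝ) + 1 + ((h:ℝ)+1) := by
                  rw [hθ, mul_div_assoc', div_le_iff₀ h0]
                  nlinarith
                nlinarith
            have C1 : θ^(x-ρ) * (((h:ℝ)+2)*θ^ρ - ((h:ℝ)+1)) ≤ (n:ℝ) + 1 := by
              have hU := lemU (x-ρ) (by omega)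
              have hxx : ρ + (x - ρ) = x := by omega
              rw [hxx] at hU
              have hp : (0:ℝ) ≤ θ^(x-ρ) := pow_nonneg hθ0.le _
              calc θ^(x-ρ) * (((h:ℝ)+2)*θ^ρ - ((h:ℝ)+1))
                  ≤ θ^(x-ρ) * (((ball ends v₀ ρ).card:ℝ)+1) :=
                    mul_le_mul_of_nonneg_left A1 hp
                _ = (((ball ends v₀ ρ).card:ℝ)+1) * θ^(x-ρ) := by ring
                _ ≤ ((ball ends v₀ x).card:ℝ)+1 := hU
                _ ≤ (n:ℝ)+1 := by linarith
            rw [hθ] at C1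
            have hfin := finalC1 hh h16 h16h hρx C1
            have hsz : (X.card:ℝ) ≤ 2*(ρ:ℝ) + 2*(x:ℝ) + 3 := by
              have h1 : X.card ≤ 2*ρ + 2*x + 3 := by omega
              exact_mod_cast h1
            linarith
          · have C2 : ((h:ℝ)+2)*θ^x ≤ (n:ℝ) + h + 1 := by
              have := lemT x (le_refl x) (by omega)
              linarith
            rw [hθ] at C2
            have hfin := finalC2 hh h16 C2
            have hsz : (X.card:ℝ) ≤ 4*(x:ℝ) + 5 := by
              have h1 : X.card ≤ 4*x + 5 := by omega
              exact_mod_cast h1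
            linarith
      · -- deletion case
        have htrig : h * (eTouch ends (ball ends v₀ rs)).card ≤
            (h+1) * (ball ends v₀ rs).card := by
          simp only [hev_def] at hspec
          tauto
        push_neg at hdense
        have hBlt : (ball ends v₀ rs).card < n := by
          by_contra hge
          push_neg at hge
          have hle := card_le_univ (ball ends v₀ rs)
          rw [← hn] at hle
          have hcardeq : (ball ends v₀ rs).card = n := le_antisymm hle hge
          have heq : ball ends v₀ rs = Finset.univ := by
            apply Finset.eq_univ_of_card
            rw [hcardeq, hn]
          have hEm : (eIn ends (ball ends v₀ rs)).card = m := by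
            rw [heq]
            simp [eIn, hm]
          omega
        have hB1 : 1 ≤ (ball ends v₀ rs).card :=
          card_pos.2 ⟨v₀, root_mem_ball ends v₀ rs⟩
        have hTm : (eTouch ends (ball ends v₀ rs)).card ≤ m := by
          have := card_le_univ (eTouch ends (ball ends v₀ rs))
          rwa [← hm] at this
        set B := ball ends v₀ rs with hBdef
        let V' := {w : V // w ∉ B}
        let ι' := {e : ι // (ends e).1 ∉ B ∧ (ends e).2 ∉ B}
        let ends' : ι' → V' × V' :=
          fun e => (⟨(ends e.1).1, e.2.1⟩, ⟨(ends e.1).2, e.2.2⟩)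
        have hcV' : Fintype.card V' = n - B.card := by
          show Fintype.card {w : V // w ∉ B} = n - B.card
          rw [Fintype.card_subtype_compl, Fintype.card_coe, hn]
        have hcι' : Fintype.card ι' = m - (eTouch ends B).card := by
          have h1 : Fintype.card ι' =
              (Finset.univ.filter (fun e : ι => (ends e).1 ∉ B ∧ (ends e).2 ∉ B)).card :=
            Fintype.card_subtype _
          have h2 : (Finset.univ.filter (fun e : ι => (ends e).1 ∉ B ∧ (ends e).2 ∉ B)) =
              Finset.univ \ eTouch ends B := by
            ext e
            simp [eTouch, not_or]
          rw [h1, h2, card_sdiff_of_subset (subset_univ _), card_univ, ← hm]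
        have hE' : ((h + 1 : ℝ) / h) * Fintype.card V' ≤ Fintype.card ι' := by
          have cb : ((Fintype.card V' : ℕ):ℝ) = (n:ℝ) - (B.card:ℝ) := by
            rw [hcV', Nat.cast_sub hBlt.le]
          have ci : ((Fintype.card ι' : ℕ):ℝ) = (m:ℝ) - ((eTouch ends B).card:ℝ) := by
            rw [hcι', Nat.cast_sub hTm]
          have ctrig : (h:ℝ) * ((eTouch ends B).card:ℝ) ≤ ((h:ℝ)+1) * (B.card:ℝ) := by
            exact_mod_cast htrig
          rw [cb, ci, div_mul_eq_mul_div, div_le_iff₀ h0]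
          nlinarith
        have hV'pos : 1 ≤ Fintype.card V' := by
          rw [hcV']
          omega
        by_cases hone : Fintype.card V' = 1
        · have hθ1 : (1:ℝ) < ((h:ℝ)+1)/h := one_lt_theta hh
          have hm2 : 2 ≤ Fintype.card ι' := by
            by_contra hcon
            push_neg at hcon
            have hle1 : ((Fintype.card ι' : ℕ):ℝ) ≤ 1 := by
              exact_mod_cast Nat.lt_succ_iff.mp hcon
            rw [hone] at hE'
            push_cast at hE'
            linarith
          obtain ⟨v', hv'⟩ := Fintype.card_eq_one_iff.1 hone
          refine ⟨{v'.val}, ?_, ?_⟩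
          · rw [card_singleton]
            push_cast
            nlinarith
          · rw [card_singleton]
            have hmap : ∀ e' : ι', e'.val ∈ eIn ends ({v'.val} : Finset V) := by
              intro e'
              simp only [eIn, mem_filter, mem_univ, true_and, mem_singleton]
              constructor
              · exact congrArg Subtype.val (hv' ⟨(ends e'.val).1, e'.2.1⟩)
              · exact congrArg Subtype.val (hv' ⟨(ends e'.val).2, e'.2.2⟩)
            have hinj : Fintype.card ι' ≤ (eIn ends ({v'.val} : Finset V)).card := by
              rw [← Fintype.card_coe (eIn ends ({v'.val} : Finset V))]
              apply Fintype.card_le_of_injective (fun e' => ⟨e'.val, hmap e'⟩)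
              intro a b hab
              have hab' : a.val = b.val := by simpa using congrArg Subtype.val hab
              exact Subtype.ext hab'
            omega
        · have hV'2 : 2 ≤ Fintype.card V' := by omega
          have hcardle : Fintype.card V' ≤ N := by
            rw [hcV']
            omega
          obtain ⟨X', hX1, hX2⟩ := IH V' ι' ends' h hh hcardle hV'2 hE'
          refine ⟨X'.map ⟨Subtype.val, Subtype.val_injective⟩, ?_, ?_⟩
          · rw [card_map]
            have hmono : Real.logb 2 (Fintype.card V') ≤ Real.logb 2 n := by
              apply logb_mono
              · have h01 : 0 < Fintype.card V' := by omega
                exact_mod_cast h01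
              · have hle2 : Fintype.card V' ≤ n := by
                  rw [hcV']; omega
                exact_mod_cast hle2
            have hlbpos : 0 ≤ Real.logb 2 (Fintype.card V') := by
              apply logb_nonneg_of_one_le
              have h01 : 1 ≤ Fintype.card V' := hV'pos
              exact_mod_cast h01
            calc (X'.card:ℝ) < 4*h*Real.logb 2 (Fintype.card V') := hX1
              _ ≤ 4*h*Real.logb 2 n := by nlinarith
          · rw [card_map]
            have hcount : (eIn ends' X').card ≤
                (eIn ends (X'.map ⟨Subtype.val, Subtype.val_injective⟩)).card := by
              apply card_le_card_of_injOn (fun e' => e'.val)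
              · intro e' he'
                simp only [eIn, coe_filter, mem_coe, mem_filter, mem_univ, true_and, Set.mem_setOf_eq] at he' ⊢
                constructor
                · exact mem_map.2 ⟨(ends' e').1, he'.1, rfl⟩
                · exact mem_map.2 ⟨(ends' e').2, he'.2, rfl⟩
              · intro a _ b _ hab
                exact Subtype.ext hab
            omega

end BF

/-- (Berman–Fürer, Lemma 3.2)  A multigraph is encoded by an edge-index
type `ι` with endpoint map `ends : ι → V × V` (loops and parallel edges allowed).
For any integer `h ≥ 1`, if `|E| ≥ ((h+1)/h)·|V|` then there is a set `X` of fewer than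
`4·h·log₂ n` vertices such that the induced subgraph `G[X]` has strictly more edges
than vertices. -/
theorem stmt_1 {V ι : Type*} [Fintype V] [DecidableEq V] [Fintype ι]
    (ends : ι → V × V) (h : ℕ) (hh : 1 ≤ h)
    (n : ℕ) (hn : n = Fintype.card V) (hn2 : 2 ≤ n)
    (hE : ((h + 1 : ℝ) / h) * Fintype.card V ≤ Fintype.card ι) :
    ∃ X : Finset V,
      (X.card : ℝ) < 4 * h * Real.logb 2 n ∧
      X.card < (Finset.univ.filter (fun e : ι => (ends e).1 ∈ X ∧ (ends e).2 ∈ X)).card := by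
  obtain ⟨X, h1, h2⟩ := BF.core (Fintype.card V) V ι ends h hh (le_refl _) (hn ▸ hn2) hE
  refine ⟨X, ?_, ?_⟩
  · rw [hn]
    exact h1
  · have heq : (Finset.univ.filter (fun e : ι => (ends e).1 ∈ X ∧ (ends e).2 ∈ X)) =
        BF.eIn ends X := by
      simp [BF.eIn]
    rw [heq]
    exact h2
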